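/- arXiv:1504.08197 — 8 statements merged into one kernel-verified Lean document; each statement's English description precedes it below -/
import Mathlib

section
/- For p > 1 and t > 1, the equation t^p · ((x-p)/x) · (x/(x-1))^p = 1 has a unique solution x in the interval (p, ∞). -/
open Real Filter Set

-- auxiliary: the log version
noncomputable def gfun (p t : ℝ) : ℝ → ℝ :=
  fun x => p * Real.log t + (Real.log (x - p) - Real.log x) + p * (Real.log x - Real.log (x - 1))

lemma gfun_hasDerivAt (p t : ℝ) (hp : 1 < p) {x : ℝ} (hx : p < x) :
    HasDerivAt (gfun p t) (1/(x-p) - 1/x + p * (1/x - 1/(x-1))) x := by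
  have hx1 : (1:ℝ) < x := hp.trans hx
  have h0 : x ≠ 0 := by linarith
  have h1 : x - 1 ≠ 0 := by linarith
  have h2 : x - p ≠ 0 := by linarith
  have d1 : HasDerivAt (fun x => Real.log (x - p)) (1/(x-p)) x := by
    have := (Real.hasDerivAt_log h2).comp x ((hasDerivAt_id x).sub_const p)
    simpa [Function.comp_def] using this
  have d2 : HasDerivAt Real.log (1/x) x := by simpa [one_div] using Real.hasDerivAt_log h0
  have d3 : HasDerivAt (fun x => Real.log (x - 1)) (1/(x-1)) x := by
    have := (Real.hasDerivAt_log h1).comp x ((hasDerivAt_id x).sub_const 1)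
    simpa [Function.comp_def] using this
  have := ((hasDerivAt_const x (p * Real.log t)).add (d1.sub d2)).add
    ((d2.sub d3).const_mul p)
  show HasDerivAt (fun x => p * Real.log t + (Real.log (x - p) - Real.log x) + p * (Real.log x - Real.log (x - 1))) _ x
  simpa [gfun, Pi.add_def, Pi.sub_def] using this.congr_deriv (by ring)

lemma gfun_strictMonoOn (p t : ℝ) (hp : 1 < p) : StrictMonoOn (gfun p t) (Set.Ioi p) := by
  apply strictMonoOn_of_hasDerivWithinAt_pos (convex_Ioi p)
    (fun x hx => ((gfun_hasDerivAt p t hp hx).continuousAt.continuousWithinAt))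
    (fun x hx => ((gfun_hasDerivAt p t hp (by simpa using hx)).hasDerivWithinAt))
  intro x hx
  rw [interior_Ioi] at hx
  have hx1 : (1:ℝ) < x := hp.trans hx
  rw [Set.mem_Ioi] at hx
  have h0 : x ≠ 0 := by linarith
  have h1 : x - 1 ≠ 0 := by linarith
  have h2 : x - p ≠ 0 := by linarith
  have key : 1/(x-p) - 1/x + p * (1/x - 1/(x-1)) = p * (p - 1) / (x * (x-1) * (x-p)) := by
    field_simp
    ring
  rw [key]
  have hd : 0 < x * (x-1) * (x-p) := by
    apply mul_pos (mul_pos (by linarith) (by linarith)); linarith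
  exact div_pos (mul_pos (by linarith) (by linarith)) hd

lemma gfun_tendsto_atBot (p t : ℝ) (hp : 1 < p) :
    Tendsto (gfun p t) (nhdsWithin p (Set.Ioi p)) atBot := by
  have hp0 : p ≠ 0 := by linarith
  have hp1 : p - 1 ≠ 0 := by linarith
  have h1 : Tendsto (fun x : ℝ => Real.log (x - p)) (nhdsWithin p (Set.Ioi p)) atBot := by
    apply Real.tendsto_log_nhdsGT_zero.comp
    have : Tendsto (fun x : ℝ => x - p) (nhdsWithin p (Set.Ioi p)) (nhdsWithin 0 (Set.Ioi 0)) := by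
      apply tendsto_nhdsWithin_of_tendsto_nhds_of_eventually_within
      · have : Tendsto (fun x:ℝ => x - p) (nhds p) (nhds (p - p)) := tendsto_id.sub_const p
        simp only [sub_self] at this
        exact this.mono_left nhdsWithin_le_nhds
      · filter_upwards [self_mem_nhdsWithin] with x hx
        simp only [Set.mem_Ioi] at hx ⊢; linarith
    exact this
  have h2 : Tendsto (fun x : ℝ => p * Real.log t + (- Real.log x) + p * (Real.log x - Real.log (x-1)))
      (nhdsWithin p (Set.Ioi p)) (nhds (p * Real.log t + (- Real.log p) + p * (Real.log p - Real.log (p-1)))) := by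
    apply Filter.Tendsto.mono_left _ nhdsWithin_le_nhds
    apply ContinuousAt.tendsto
    have c1 : ContinuousAt Real.log p := Real.continuousAt_log hp0
    have c2 : ContinuousAt (fun x : ℝ => Real.log (x - 1)) p := by
      exact (Real.continuousAt_log hp1).tendsto.comp (tendsto_id.sub_const 1)
    exact (continuousAt_const.add c1.neg).add (continuousAt_const.mul (c1.sub c2))
  have := h2.add_atBot h1
  apply this.congr
  intro x
  simp [gfun]; ring

lemma log_ratio_tendsto (c : ℝ) :
    Tendsto (fun x : ℝ => Real.log x - Real.log (x - c)) atTop (nhds 0) := by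
  have h1 : Tendsto (fun x : ℝ => x / (x - c)) atTop (nhds 1) := by
    have hz : Tendsto (fun x : ℝ => c / (x - c)) atTop (nhds 0) :=
      tendsto_const_nhds.div_atTop (tendsto_atTop_add_const_right _ (-c) tendsto_id)
    have := (tendsto_const_nhds (x := (1:ℝ)) (f := atTop)).add hz
    rw [add_zero] at this
    apply this.congr'
    filter_upwards [eventually_gt_atTop (max 0 c)] with x hx
    have hxc : x - c ≠ 0 := by exact sub_ne_zero_of_ne (ne_of_gt ((le_max_right 0 c).trans_lt hx))
    field_simp
    ring
  have h2 : Tendsto (fun x : ℝ => Real.log (x / (x - c))) atTop (nhds 0) := by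
    have : ContinuousAt Real.log 1 := Real.continuousAt_log one_ne_zero
    simpa [Real.log_one, Function.comp_def] using this.tendsto.comp h1
  apply h2.congr'
  filter_upwards [eventually_gt_atTop (max 0 c)] with x hx
  have hx0 : x ≠ 0 := by have := (le_max_left 0 c).trans_lt hx; linarith
  have hxc : x - c ≠ 0 := by exact sub_ne_zero_of_ne (ne_of_gt ((le_max_right 0 c).trans_lt hx))
  rw [Real.log_div hx0 hxc]

lemma gfun_tendsto_atTop (p t : ℝ) (hp : 1 < p) :
    Tendsto (gfun p t) atTop (nhds (p * Real.log t)) := by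
  have h1 := log_ratio_tendsto p
  have h2 := log_ratio_tendsto 1
  have h1' : Tendsto (fun x : ℝ => Real.log (x - p) - Real.log x) atTop (nhds 0) := by
    simpa using h1.neg
  have := (tendsto_const_nhds (x := p * Real.log t) (f := atTop)).add
    (h1'.add (h2.const_mul p))
  simp only [mul_zero, add_zero] at this
  apply this.congr
  intro x
  simp [gfun]; ring

/-- For p > 1 and t > 1, the equation t^p · ((x-p)/x) · (x/(x-1))^p = 1
has a unique solution x in (p, ∞). -/
theorem unique_solution_p1 (p t : ℝ) (hp : 1 < p) (ht : 1 < t) :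
    ∃! x : ℝ, p < x ∧ t ^ p * ((x - p) / x) * (x / (x - 1)) ^ p = 1 := by
  have ht0 : (0:ℝ) < t := by linarith
  -- equivalence with gfun = 0
  have key : ∀ x : ℝ, p < x →
      (t ^ p * ((x - p) / x) * (x / (x - 1)) ^ p = 1 ↔ gfun p t x = 0) := by
    intro x hx
    have hx1 : (1:ℝ) < x := hp.trans hx
    have h0 : (0:ℝ) < x := by linarith
    have h1 : (0:ℝ) < x - 1 := by linarith
    have h2 : (0:ℝ) < x - p := by linarith
    have e1 : t ^ p = Real.exp (p * Real.log t) := by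
      rw [Real.rpow_def_of_pos ht0, mul_comm]
    have e2 : (x - p) / x = Real.exp (Real.log (x - p) - Real.log x) := by
      rw [Real.exp_sub, Real.exp_log h2, Real.exp_log h0]
    have e3 : (x / (x - 1)) ^ p = Real.exp (p * (Real.log x - Real.log (x - 1))) := by
      rw [Real.rpow_def_of_pos (div_pos h0 h1), Real.log_div (ne_of_gt h0) (ne_of_gt h1),
        mul_comm]
    rw [e1, e2, e3, ← Real.exp_add, ← Real.exp_add]
    constructor
    · intro h
      have := Real.exp_injective (h.trans Real.exp_zero.symm)
      simpa [gfun] using this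
    · intro h
      have : p * Real.log t + (Real.log (x - p) - Real.log x)
          + p * (Real.log x - Real.log (x - 1)) = 0 := by simpa [gfun] using h
      rw [this, Real.exp_zero]
  -- find a with gfun a < 0
  obtain ⟨a, ha, hga⟩ : ∃ a, p < a ∧ gfun p t a < 0 := by
    have := (gfun_tendsto_atBot p t hp).eventually (eventually_lt_atBot 0)
    have h2 := this.and self_mem_nhdsWithin
    obtain ⟨a, h1, h2⟩ := h2.exists
    exact ⟨a, h2, h1⟩
  -- find b with gfun b > 0
  obtain ⟨b, hb, hgb⟩ : ∃ b, p < b ∧ 0 < gfun p t b := by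
    have hlt : (0:ℝ) < p * Real.log t := mul_pos (by linarith) (Real.log_pos ht)
    have := (gfun_tendsto_atTop p t hp).eventually (eventually_gt_nhds hlt)
    obtain ⟨b, h1, h2⟩ := (this.and (eventually_gt_atTop p)).exists
    exact ⟨b, h2, h1⟩
  have hmono := gfun_strictMonoOn p t hp
  have hab : a < b := by
    by_contra h
    push_neg at h
    have := hmono.monotoneOn (Set.mem_Ioi.mpr hb) (Set.mem_Ioi.mpr ha) h
    linarith
  have hcont : ContinuousOn (gfun p t) (Set.Icc a b) := by
    intro x hx
    have hx' : p < x := lt_of_lt_of_le ha hx.1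
    exact ((gfun_hasDerivAt p t hp hx').continuousAt).continuousWithinAt
  obtain ⟨c, hc, hgc⟩ : ∃ c ∈ Set.Icc a b, gfun p t c = 0 := by
    have := intermediate_value_Icc (le_of_lt hab) hcont
    have h0 : (0:ℝ) ∈ Set.Icc (gfun p t a) (gfun p t b) := ⟨le_of_lt hga, le_of_lt hgb⟩
    obtain ⟨c, hc, hgc⟩ := this h0
    exact ⟨c, hc, hgc⟩
  have hcp : p < c := lt_of_lt_of_le ha hc.1
  refine ⟨c, ⟨hcp, (key c hcp).mpr hgc⟩, ?_⟩
  rintro y ⟨hyp, hy⟩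
  have hgy : gfun p t y = 0 := (key y hyp).mp hy
  exact hmono.injOn (Set.mem_Ioi.mpr hyp) (Set.mem_Ioi.mpr hcp) (by rw [hgy, hgc])
end

section
/- For every p > 1 and every Q > 1, there exist exactly two real numbers α, ᾱ with 1 - 1/p < α < 1 < ᾱ such that Q = α^p/(1+p(α-1)) = ᾱ^p/(1+p(ᾱ-1)). -/
open Real Set

/-- A strictly convex combination lemma: if g vanishes at three increasing
nonnegative points, contradiction, where g x = x^p - Q*(1+p*(x-1)). -/
lemma no_three_zeros (p Q : ℝ) (hp : 1 < p) {x y z : ℝ} (hx : 0 ≤ x)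
    (hxy : x < y) (hyz : y < z)
    (gx : x ^ p - Q * (1 + p * (x - 1)) = 0)
    (gy : y ^ p - Q * (1 + p * (y - 1)) = 0)
    (gz : z ^ p - Q * (1 + p * (z - 1)) = 0) : False := by
  have hz : (0:ℝ) ≤ z := by linarith
  have hzx : 0 < z - x := by linarith
  set t : ℝ := (z - y) / (z - x) with ht
  set s : ℝ := (y - x) / (z - x) with hs
  have htp : 0 < t := div_pos (by linarith) hzx
  have hsp : 0 < s := div_pos (by linarith) hzx
  have hts : t + s = 1 := by
    rw [ht, hs, ← add_div, div_eq_one_iff_eq hzx.ne']; ring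
  have hmul : t * x + s * z = y := by
    rw [ht, hs]; field_simp; ring
  have hcomb : t • x + s • z = y := by
    rw [smul_eq_mul, smul_eq_mul]; exact hmul
  have hconv := (strictConvexOn_rpow hp).2 (mem_Ici.2 hx) (mem_Ici.2 hz)
    (by intro h; linarith) htp hsp hts
  rw [hcomb] at hconv
  simp only [smul_eq_mul] at hconv
  have ex : x ^ p = Q * (1 + p * (x - 1)) := by linarith
  have ez : z ^ p = Q * (1 + p * (z - 1)) := by linarith
  rw [ex, ez] at hconv
  have e : t * (Q * (1 + p * (x - 1))) + s * (Q * (1 + p * (z - 1)))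
      = Q * (1 + p * (y - 1)) := by
    linear_combination (Q - Q * p) * hts + Q * p * hmul
  rw [e] at hconv
  linarith

/-- For p > 1 and Q > 1 there are exactly two numbers 1-1/p < α < 1 < ᾱ with
Q = α^p/(1+p(α-1)) = ᾱ^p/(1+p(ᾱ-1)). -/
theorem exactly_two_solutions (p Q : ℝ) (hp : 1 < p) (hQ : 1 < Q) :
    ∃ a b : ℝ, 1 - 1/p < a ∧ a < 1 ∧ 1 < b ∧
      Q = a ^ p / (1 + p * (a - 1)) ∧ Q = b ^ p / (1 + p * (b - 1)) ∧
      ∀ c : ℝ, 1 - 1/p < c → Q = c ^ p / (1 + p * (c - 1)) → c = a ∨ c = b := by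
  have hp0 : (0:ℝ) < p := by linarith
  set l : ℝ := 1 - 1/p with hl
  have hl0 : 0 < l := by
    have h1 : 1/p < 1 := by rw [div_lt_one hp0]; exact hp
    simp only [hl]; linarith
  have hl1 : l < 1 := by
    have : 0 < 1/p := by positivity
    simp only [hl]; linarith
  set g : ℝ → ℝ := fun x => x ^ p - Q * (1 + p * (x - 1)) with hg
  have hgcont : Continuous g := by
    have h1 : Continuous fun x : ℝ => x ^ p := Real.continuous_rpow_const hp0.le
    fun_prop
  -- denominator positivity on domain
  have hden : ∀ c : ℝ, l < c → 0 < 1 + p * (c - 1) := by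
    intro c hc
    have : 1 + p * (c - 1) = p * (c - l) := by
      simp only [hl]; field_simp; ring
    rw [this]; exact mul_pos hp0 (by linarith)
  -- equivalence between the equation and g = 0
  have hiff : ∀ c : ℝ, l < c → (Q = c ^ p / (1 + p * (c - 1)) ↔ g c = 0) := by
    intro c hc
    have hd := hden c hc
    rw [eq_div_iff hd.ne', hg]
    constructor <;> intro h <;> simp only at * <;> linarith
  -- g l > 0
  have hgl : 0 < g l := by
    have hd : 1 + p * (l - 1) = 0 := by
      simp only [hl]; field_simp; ring
    simp only [hg, hd, mul_zero, sub_zero]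
    exact rpow_pos_of_pos hl0 p
  -- g 1 < 0
  have hg1 : g 1 < 0 := by
    simp only [hg, Real.one_rpow]
    nlinarith
  -- find a in (l,1)
  obtain ⟨a, haI, hga⟩ : ∃ a ∈ Ioo l 1, g a = 0 := by
    have := intermediate_value_Ioo' hl1.le hgcont.continuousOn
    have h0 : (0:ℝ) ∈ Ioo (g 1) (g l) := ⟨hg1, hgl⟩
    obtain ⟨a, ha, hga⟩ := this h0
    exact ⟨a, ha, hga⟩
  -- find M > 1 with g M > 0
  obtain ⟨M, hM1, hgM⟩ : ∃ M : ℝ, 1 < M ∧ 0 < g M := by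
    have htend := tendsto_rpow_atTop (show 0 < p - 1 by linarith)
    have hev : ∀ᶠ x : ℝ in Filter.atTop, Q * p + Q ≤ x ^ (p - 1) :=
      htend.eventually_ge_atTop _
    have hev2 : ∀ᶠ x : ℝ in Filter.atTop, (2:ℝ) ≤ x := Filter.eventually_ge_atTop 2
    obtain ⟨M, hM⟩ := (hev.and hev2).exists
    refine ⟨M, by linarith [hM.2], ?_⟩
    have hM0 : (0:ℝ) < M := by linarith [hM.2]
    have hMp : M ^ p = M * M ^ (p - 1) := by
      rw [← Real.rpow_one_add' hM0.le (by intro h; simp at h; linarith)]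
      ring_nf
    have h1 : M * (Q * p + Q) ≤ M * M ^ (p - 1) :=
      mul_le_mul_of_nonneg_left hM.1 hM0.le
    simp only [hg]
    rw [hMp]
    nlinarith [hM.2, hQ, hp0]
  -- find b in (1,M)
  obtain ⟨b, hbI, hgb⟩ : ∃ b ∈ Ioo (1:ℝ) M, g b = 0 := by
    have := intermediate_value_Ioo hM1.le hgcont.continuousOn
    have h0 : (0:ℝ) ∈ Ioo (g 1) (g M) := ⟨hg1, hgM⟩
    obtain ⟨b, hb, hgb⟩ := this h0
    exact ⟨b, hb, hgb⟩
  refine ⟨a, b, haI.1, haI.2, hbI.1, ?_, ?_, ?_⟩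
  · exact (hiff a haI.1).2 hga
  · exact (hiff b (by linarith [hbI.1, hl1])).2 hgb
  · intro c hc hQc
    have hgc : g c = 0 := (hiff c hc).1 hQc
    have ha0 : 0 ≤ a := by linarith [haI.1, hl0]
    have hc0 : 0 ≤ c := by linarith [hl0]
    have hab : a < b := by linarith [haI.2, hbI.1]
    rcases lt_trichotomy c a with h | h | h
    · exact absurd (no_three_zeros p Q hp hc0 h (by linarith) hgc hga hgb) id
    · exact Or.inl h
    · rcases lt_trichotomy c b with h2 | h2 | h2
      · exact absurd (no_three_zeros p Q hp ha0 h h2 hga hgc hgb) id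
      · exact Or.inr h2
      · exact absurd (no_three_zeros p Q hp ha0 hab h2 hga hgb hgc) id
end

section
/- For every p > 1 and Q > 1, the equation Q = ᾱ^p/(1 + p(ᾱ - 1)) has a unique solution ᾱ in [1, ∞), and this solution satisfies Q^{1/(p-1)} ≤ ᾱ < (pQ)^{1/(p-1)}. -/
open Real

/-- Key algebraic facts about a solution: a > 1, Q < a^(p-1) < pQ. -/
lemma albar_key (p Q : ℝ) (hp : 1 < p) (hQ : 1 < Q) {a : ℝ} (ha : 1 ≤ a)
    (heq : Q = a ^ p / (1 + p * (a - 1))) :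
    1 < a ∧ Q < a ^ (p - 1) ∧ a ^ (p - 1) < p * Q := by
  have hD : (0:ℝ) < 1 + p * (a - 1) := by nlinarith
  have heq' : Q * (1 + p * (a - 1)) = a ^ p := by
    rw [heq]; field_simp
  have ha1 : 1 < a := by
    rcases eq_or_lt_of_le ha with h | h
    · exfalso
      rw [← h] at heq
      simp [Real.one_rpow] at heq
      linarith
    · exact h
  have ha0 : (0:ℝ) < a := by linarith
  have hsplit : a ^ p = a * a ^ (p - 1) := by
    have h := Real.rpow_add ha0 1 (p - 1)
    rw [Real.rpow_one, show (1:ℝ) + (p - 1) = p by ring] at h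
    exact h
  have hX : 0 < a ^ (p - 1) := Real.rpow_pos_of_pos ha0 _
  refine ⟨ha1, ?_, ?_⟩
  · nlinarith [mul_pos (mul_pos (sub_pos.mpr hQ) (sub_pos.mpr hp)) (sub_pos.mpr ha1)]
  · nlinarith

/-- Bernoulli-type tangent line inequality for rpow. -/
lemma bern_tangent (p : ℝ) (hp : 1 ≤ p) {a b : ℝ} (ha : 0 < a) (hb : 0 ≤ b) :
    a ^ p + p * a ^ (p - 1) * (b - a) ≤ b ^ p := by
  have hs : -1 ≤ b / a - 1 := by
    have : 0 ≤ b / a := div_nonneg hb ha.le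
    linarith
  have h := one_add_mul_self_le_rpow_one_add hs hp
  have h1 : (1 + (b / a - 1)) = b / a := by ring
  rw [h1, Real.div_rpow hb ha.le] at h
  have hap : 0 < a ^ p := Real.rpow_pos_of_pos ha p
  have h2 : (1 + p * (b / a - 1)) * a ^ p ≤ b ^ p := (le_div_iff₀ hap).mp h
  have hsplit : a ^ p = a * a ^ (p - 1) := by
    have h := Real.rpow_add ha 1 (p - 1)
    rw [Real.rpow_one, show (1:ℝ) + (p - 1) = p by ring] at h
    exact h
  have h3 : (1 + p * (b / a - 1)) * a = a + p * (b - a) := by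
    field_simp
  calc a ^ p + p * a ^ (p - 1) * (b - a)
      = (a + p * (b - a)) * a ^ (p - 1) := by rw [hsplit]; ring
    _ = ((1 + p * (b / a - 1)) * a) * a ^ (p - 1) := by rw [h3]
    _ = (1 + p * (b / a - 1)) * a ^ p := by rw [hsplit]; ring
    _ ≤ b ^ p := h2

/-- For p > 1 and Q > 1, the equation Q = ᾱ^p/(1+p(ᾱ-1)) has a unique solution
ᾱ in [1,∞), and this solution satisfies Q^{1/(p-1)} ≤ ᾱ < (pQ)^{1/(p-1)}. -/
theorem unique_albar_and_bounds (p Q : ℝ) (hp : 1 < p) (hQ : 1 < Q) :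
    (∃! a : ℝ, 1 ≤ a ∧ Q = a ^ p / (1 + p * (a - 1))) ∧
    (∀ a : ℝ, 1 ≤ a → Q = a ^ p / (1 + p * (a - 1)) →
      Q ^ (1/(p-1)) ≤ a ∧ a < (p * Q) ^ (1/(p-1))) := by
  have hp1 : (0:ℝ) < p - 1 := by linarith
  have hQ0 : (0:ℝ) < Q := by linarith
  constructor
  · -- existence and uniqueness
    have hpq : (1:ℝ) < p * Q := by nlinarith
    set M : ℝ := (p * Q) ^ (1 / (p - 1)) with hM
    have hM1 : 1 < M := by
      rw [hM]
      apply Real.one_lt_rpow_iff_of_pos (by linarith) |>.mpr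
      exact Or.inl ⟨hpq, by positivity⟩
    have hMp : M ^ (p - 1) = p * Q := by
      rw [hM, one_div, Real.rpow_inv_rpow (by linarith) (by linarith)]
    set f : ℝ → ℝ := fun x => x ^ p - Q * (1 + p * (x - 1)) with hf
    have hcont : Continuous f := by
      apply Continuous.sub
      · exact continuous_id.rpow_const fun x => Or.inr (by linarith)
      · continuity
    have hf1 : f 1 = 1 - Q := by simp [hf, Real.one_rpow]
    have hMsplit : M ^ p = M * M ^ (p - 1) := by
      have h := Real.rpow_add (by linarith : (0:ℝ) < M) 1 (p - 1)
      rw [Real.rpow_one, show (1:ℝ) + (p - 1) = p by ring] at h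
      exact h
    have hfM : 0 < f M := by
      have : f M = M ^ p - Q * (1 + p * (M - 1)) := rfl
      rw [this, hMsplit, hMp]
      nlinarith
    have hsub := intermediate_value_Icc hM1.le hcont.continuousOn
    have h0 : (0:ℝ) ∈ Set.Icc (f 1) (f M) := ⟨by rw [hf1]; linarith, hfM.le⟩
    obtain ⟨a, haI, hfa⟩ := hsub h0
    have ha1 : 1 ≤ a := haI.1
    have hDa : (0:ℝ) < 1 + p * (a - 1) := by nlinarith
    have heqa : Q = a ^ p / (1 + p * (a - 1)) := by
      rw [eq_div_iff hDa.ne']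
      have : a ^ p - Q * (1 + p * (a - 1)) = 0 := hfa
      linarith
    refine ⟨a, ⟨ha1, heqa⟩, ?_⟩
    -- uniqueness
    rintro b ⟨hb1, heqb⟩
    obtain ⟨hb1', hbl, hbu⟩ := albar_key p Q hp hQ hb1 heqb
    obtain ⟨ha1', hal, hau⟩ := albar_key p Q hp hQ ha1 heqa
    have hDb : (0:ℝ) < 1 + p * (b - 1) := by nlinarith
    have heqa' : Q * (1 + p * (a - 1)) = a ^ p := by rw [heqa]; field_simp
    have heqb' : Q * (1 + p * (b - 1)) = b ^ p := by rw [heqb]; field_simp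
    have hab := bern_tangent p hp.le (by linarith : (0:ℝ) < a) (by linarith : (0:ℝ) ≤ b)
    have hba := bern_tangent p hp.le (by linarith : (0:ℝ) < b) (by linarith : (0:ℝ) ≤ a)
    -- from hab: (b-a)*(a^(p-1) - Q) ≤ 0, and a^(p-1) > Q, so b ≤ a; symmetric
    have h1 : b ≤ a := by
      by_contra hlt
      push_neg at hlt
      nlinarith [mul_pos (show (0:ℝ) < p by linarith)
        (mul_pos (sub_pos.mpr hlt) (sub_pos.mpr hal))]
    have h2 : a ≤ b := by
      by_contra hlt
      push_neg at hlt
      nlinarith [mul_pos (show (0:ℝ) < p by linarith)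
        (mul_pos (sub_pos.mpr hlt) (sub_pos.mpr hbl))]
    linarith
  · rintro a ha heq
    obtain ⟨ha1, hl, hu⟩ := albar_key p Q hp hQ ha heq
    have ha0 : (0:ℝ) < a := by linarith
    have hkey : (a ^ (p - 1)) ^ (1 / (p - 1)) = a := by
      rw [one_div]; exact Real.rpow_rpow_inv ha0.le (by linarith)
    constructor
    · calc Q ^ (1/(p-1)) ≤ (a ^ (p-1)) ^ (1/(p-1)) :=
            Real.rpow_le_rpow hQ0.le hl.le (by positivity)
        _ = a := hkey
    · calc a = (a ^ (p-1)) ^ (1/(p-1)) := hkey.symm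
        _ < (p * Q) ^ (1/(p-1)) :=
            Real.rpow_lt_rpow (by positivity) hu (by positivity)
end

section
/- Let p > 1 and β ∈ (1/p, 1) with Q^{1/(p-1)} = β^{p/(p-1)} / (1 + (p/(p-1))(β - 1)). Then x = 1/(1-β) satisfies x > p/(p-1) and (Q^{1/p})^{p/(p-1)} · ((x - p/(p-1))/x) · (x/(x-1))^{p/(p-1)} = 1; that is, p₁(p/(p-1), Q^{1/p}) = 1/(1-β). -/
/-- Corollary: if β ∈ (1/p, 1) satisfies Q^{1/(p-1)} = β^{p/(p-1)}/(1+(p/(p-1))(β-1)),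
then x = 1/(1-β) satisfies x > p/(p-1) and
(Q^{1/p})^{p/(p-1)} · ((x - p/(p-1))/x) · (x/(x-1))^{p/(p-1)} = 1. -/
theorem p1_dual_eq_one_div_one_sub_beta (p Q β : ℝ) (hp : 1 < p) (hQ : 1 < Q)
    (hβ₁ : 1/p < β) (hβ₂ : β < 1)
    (hβQ : Q ^ (1/(p-1)) = β ^ (p/(p-1)) / (1 + (p/(p-1)) * (β - 1))) :
    p/(p-1) < 1/(1-β) ∧
    (Q ^ (1/p)) ^ (p/(p-1)) * ((1/(1-β) - p/(p-1)) / (1/(1-β))) *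
      ((1/(1-β)) / (1/(1-β) - 1)) ^ (p/(p-1)) = 1 := by
  have hp0 : 0 < p := lt_trans one_pos hp
  have hp1 : 0 < p - 1 := by linarith
  have hβ0 : 0 < β := lt_trans (by positivity) hβ₁
  have h1β : 0 < 1 - β := by linarith
  have hQ0 : 0 < Q := lt_trans one_pos hQ
  have hpβ : 1 < β * p := (div_lt_iff₀ hp0).mp hβ₁
  have hA : 0 < 1 + (p/(p-1)) * (β - 1) := by
    have h : 1 + (p/(p-1)) * (β - 1) = (β*p - 1)/(p-1) := by field_simp; ring
    rw [h]
    exact div_pos (by linarith) hp1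
  constructor
  · rw [div_lt_div_iff₀ hp1 h1β]
    nlinarith
  · have hQp : (Q ^ (1/p)) ^ (p/(p-1)) = Q ^ (1/(p-1)) := by
      rw [← Real.rpow_mul hQ0.le]
      congr 1
      field_simp
    have e1 : (1/(1-β) - p/(p-1)) / (1/(1-β)) = 1 + (p/(p-1)) * (β - 1) := by
      field_simp
      ring
    have e2 : (1/(1-β)) / (1/(1-β) - 1) = 1/β := by
      have h : 1/(1-β) - 1 = β/(1-β) := by field_simp; ring
      rw [h]
      rw [div_div_div_cancel_right₀]
      exact h1β.ne'
    have hβp : (0:ℝ) < β ^ (p/(p-1)) := Real.rpow_pos_of_pos hβ0 _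
    rw [hQp, hβQ, e1, e2, one_div, Real.inv_rpow hβ0.le]
    have hB : (0:ℝ) < p - 1 + p*(β-1) := by nlinarith
    field_simp
end

section
/- Let p > 1 and Q > 1. Let 1 - 1/p < α ≤ 1 ≤ ᾱ be the two solutions of Q = γ^p/(1+p(γ-1)), and let 1/p < β ≤ 1 ≤ β̄ be the two solutions of Q^{1/(p-1)} = γ^{p'}/(1 + p'(γ-1)) with p' = p/(p-1). Then β = ᾱ/(1 + p(ᾱ-1)) and β̄ = α/(1 + p(α-1)), and conversely α = β̄/(1 + p'(β̄-1)) and ᾱ = β/(1 + p'(β-1)). -/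
open Real Set
noncomputable def Ff (q x : ℝ) : ℝ := x ^ q / (1 + q * (x - 1))

lemma hasDerivAt_Ff (q : ℝ) {x : ℝ} (hx : 0 < x) (hD : 1 + q * (x - 1) ≠ 0) :
    HasDerivAt (Ff q) ((q * x ^ (q - 1) * (1 + q * (x - 1)) - x ^ q * q) / (1 + q * (x - 1)) ^ 2) x := by
  have h1 : HasDerivAt (fun x : ℝ => x ^ q) (q * x ^ (q - 1)) x :=
    Real.hasDerivAt_rpow_const (Or.inl hx.ne')
  have h2 : HasDerivAt (fun x : ℝ => 1 + q * (x - 1)) q x := by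
    simpa using (((hasDerivAt_id x).sub_const 1).const_mul q).const_add 1
  exact h1.div h2 hD

lemma Ff_strictAntiOn {q : ℝ} (hq : 1 < q) : StrictAntiOn (Ff q) (Ioc (1 - 1/q) 1) := by
  have hq0 : 0 < q := by linarith
  have hlb : (0:ℝ) < 1 - 1/q := by
    have : 1/q < 1 := by rw [div_lt_one hq0]; exact hq
    linarith
  have hDpos : ∀ x ∈ Ioc (1 - 1/q) 1, 0 < 1 + q * (x - 1) := by
    intro x hx
    have h1 : 1 - 1/q < x := hx.1
    have h2 : q * (1/q) = 1 := by field_simp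
    nlinarith [mul_lt_mul_of_pos_left h1 hq0]
  apply strictAntiOn_of_deriv_neg (convex_Ioc _ _)
  · apply ContinuousOn.div
    · exact fun x hx => (Real.continuousAt_rpow_const x q (Or.inr hq0.le)).continuousWithinAt
    · fun_prop
    · exact fun x hx => (hDpos x hx).ne'
  · intro x hx
    rw [interior_Ioc] at hx
    have hx0 : 0 < x := lt_trans hlb hx.1
    have hD : 0 < 1 + q * (x - 1) := hDpos x ⟨hx.1, hx.2.le⟩
    rw [(hasDerivAt_Ff q hx0 hD.ne').deriv]
    apply div_neg_of_neg_of_pos _ (by positivity)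
    have hxq : x ^ q = x ^ (q - 1) * x := by
      rw [← Real.rpow_add_one hx0.ne' (q-1)]; ring_nf
    have hxq1 : 0 < x ^ (q - 1) := Real.rpow_pos_of_pos hx0 _
    rw [hxq]
    have : q * x ^ (q-1) * (1 + q*(x-1)) - x^(q-1)*x*q = q * x^(q-1) * ((q-1)*(x-1)) := by ring
    rw [this]
    have : (q-1)*(x-1) < 0 := mul_neg_of_pos_of_neg (by linarith) (by linarith [hx.2])
    exact mul_neg_of_pos_of_neg (by positivity) this

lemma Ff_strictMonoOn {q : ℝ} (hq : 1 < q) : StrictMonoOn (Ff q) (Ici 1) := by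
  have hq0 : 0 < q := by linarith
  have hDpos : ∀ x ∈ Ici (1:ℝ), 0 < 1 + q * (x - 1) := by
    intro x hx
    have : (1:ℝ) ≤ x := hx
    nlinarith
  apply strictMonoOn_of_deriv_pos (convex_Ici _)
  · apply ContinuousOn.div
    · exact fun x hx => (Real.continuousAt_rpow_const x q (Or.inr hq0.le)).continuousWithinAt
    · fun_prop
    · exact fun x hx => (hDpos x hx).ne'
  · intro x hx
    rw [interior_Ici] at hx
    have hx1 : (1:ℝ) < x := hx
    have hx0 : 0 < x := by linarith
    have hD : 0 < 1 + q * (x - 1) := hDpos x (by exact le_of_lt hx1)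
    rw [(hasDerivAt_Ff q hx0 hD.ne').deriv]
    apply div_pos _ (by positivity)
    have hxq : x ^ q = x ^ (q - 1) * x := by
      rw [← Real.rpow_add_one hx0.ne' (q-1)]; ring_nf
    have hxq1 : 0 < x ^ (q - 1) := Real.rpow_pos_of_pos hx0 _
    rw [hxq]
    have h : q * x ^ (q-1) * (1 + q*(x-1)) - x^(q-1)*x*q = q * x^(q-1) * ((q-1)*(x-1)) := by ring
    rw [h]
    exact mul_pos (by positivity) (mul_pos (by linarith) (by linarith))

lemma denom_transform {p γ : ℝ} (hp : 1 < p) (hD : 1 + p * (γ - 1) ≠ 0) :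
    1 + (p/(p-1)) * (γ / (1 + p * (γ - 1)) - 1) = 1 / (1 + p * (γ - 1)) := by
  have h1 : p - 1 ≠ 0 := by linarith
  field_simp
  ring

lemma key_transform {p γ : ℝ} (hp : 1 < p) (hγ : 0 < γ) (hD : 0 < 1 + p * (γ - 1)) :
    Ff (p/(p-1)) (γ / (1 + p * (γ - 1))) = (γ ^ p / (1 + p * (γ - 1))) ^ (1/(p-1)) := by
  have h1 : p - 1 ≠ 0 := by linarith
  set D := 1 + p * (γ - 1) with hDdef
  rw [Ff, denom_transform hp hD.ne']
  have hq : p/(p-1) = 1/(p-1) + 1 := by field_simp; ring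
  have e1 : (γ/D) ^ (p/(p-1)) = γ ^ (p/(p-1)) / D ^ (p/(p-1)) :=
    Real.div_rpow hγ.le hD.le _
  have e2 : γ ^ (p/(p-1)) = (γ ^ p) ^ (1/(p-1)) := by
    rw [← Real.rpow_mul hγ.le]; ring_nf
  have e3 : D ^ (p/(p-1)) = D ^ (1/(p-1)) * D := by
    rw [hq, Real.rpow_add_one hD.ne']
  have e4 : (γ ^ p / D) ^ (1/(p-1)) = (γ ^ p) ^ (1/(p-1)) / D ^ (1/(p-1)) :=
    Real.div_rpow (Real.rpow_nonneg hγ.le _) hD.le _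
  rw [e1, e2, e3, e4]
  have hDY : (0:ℝ) < D ^ (1/(p-1)) := Real.rpow_pos_of_pos hD _
  field_simp
  rw [← hDdef]



/-- Correspondence between the two solutions for (Q, p) and for (Q^{1/(p-1)}, p'). -/
theorem dual_pairs (p Q a ab b bb : ℝ) (hp : 1 < p) (hQ : 1 < Q)
    (ha₁ : 1 - 1/p < a) (ha₂ : a ≤ 1) (hab : 1 ≤ ab)
    (hQa : Q = a ^ p / (1 + p * (a - 1)))
    (hQab : Q = ab ^ p / (1 + p * (ab - 1)))
    (hb₁ : 1/p < b) (hb₂ : b ≤ 1) (hbb : 1 ≤ bb)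
    (hQb : Q ^ (1/(p-1)) = b ^ (p/(p-1)) / (1 + (p/(p-1)) * (b - 1)))
    (hQbb : Q ^ (1/(p-1)) = bb ^ (p/(p-1)) / (1 + (p/(p-1)) * (bb - 1))) :
    b = ab / (1 + p * (ab - 1)) ∧ bb = a / (1 + p * (a - 1)) ∧
    a = bb / (1 + (p/(p-1)) * (bb - 1)) ∧ ab = b / (1 + (p/(p-1)) * (b - 1)) := by
  have hp1 : 0 < p - 1 := by linarith
  have hp0 : 0 < p := by linarith
  set q := p/(p-1) with hqdef
  have hq : 1 < q := by rw [hqdef, lt_div_iff₀ hp1]; linarith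
  have hlb : 1 - 1/q = 1/p := by rw [hqdef, one_div_div]; field_simp; ring
  have hpp : p * (1/p) = 1 := by field_simp
  have hDa : 0 < 1 + p * (a - 1) := by nlinarith [mul_lt_mul_of_pos_left ha₁ hp0]
  have hDab : 0 < 1 + p * (ab - 1) := by nlinarith
  have hab0 : 0 < ab := by linarith
  have ha0 : 0 < a := by
    have h1 : 1/p < 1 := by rw [div_lt_one hp0]; exact hp
    linarith
  have hbmem : b ∈ Set.Ioc (1 - 1/q) 1 := by rw [hlb]; exact ⟨hb₁, hb₂⟩
  have hβmem : ab / (1 + p*(ab-1)) ∈ Set.Ioc (1 - 1/q) 1 := by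
    rw [hlb]
    constructor
    · rw [div_lt_div_iff₀ hp0 hDab]; nlinarith
    · rw [div_le_one hDab]; nlinarith
  have heq1 : Ff q b = Ff q (ab / (1 + p*(ab-1))) := by
    have h1 : Ff q b = Q ^ (1/(p-1)) := by rw [Ff]; exact hQb.symm
    have h2 : Ff q (ab/(1 + p*(ab-1))) = Q ^ (1/(p-1)) := by
      rw [hqdef, key_transform hp hab0 hDab, ← hQab]
    rw [h1, h2]
  have hb_eq : b = ab / (1 + p*(ab-1)) := (Ff_strictAntiOn hq).injOn hbmem hβmem heq1
  have hδmem : a / (1 + p*(a-1)) ∈ Set.Ici (1:ℝ) := by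
    rw [Set.mem_Ici, le_div_iff₀ hDa]; nlinarith
  have heq2 : Ff q bb = Ff q (a / (1 + p*(a-1))) := by
    have h1 : Ff q bb = Q ^ (1/(p-1)) := by rw [Ff]; exact hQbb.symm
    have h2 : Ff q (a/(1 + p*(a-1))) = Q ^ (1/(p-1)) := by
      rw [hqdef, key_transform hp ha0 hDa, ← hQa]
    rw [h1, h2]
  have hbb_eq : bb = a / (1 + p*(a-1)) :=
    (Ff_strictMonoOn hq).injOn (Set.mem_Ici.2 hbb) hδmem heq2
  refine ⟨hb_eq, hbb_eq, ?_, ?_⟩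
  · rw [hbb_eq, hqdef, denom_transform hp hDa.ne']
    field_simp
  · rw [hb_eq, hqdef, denom_transform hp hDab.ne']
    field_simp
end

section
/- Let p > 1, Q > 1, let ᾱ ≥ 1 be the unique solution in [1,∞) of Q = ᾱ^p/(1+p(ᾱ-1)), and let β ∈ (1/p, 1] satisfy Q^{1/(p-1)} = β^{p/(p-1)}/(1 + (p/(p-1))(β-1)). Then β/(pβ - 1) = ᾱ/(p-1). -/
/-- If ᾱ ≥ 1 solves Q = ᾱ^p/(1+p(ᾱ-1)) and β ∈ (1/p,1] solves
Q^{1/(p-1)} = β^{p/(p-1)}/(1+(p/(p-1))(β-1)), then β/(pβ-1) = ᾱ/(p-1). -/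
theorem beta_albar_relation (p Q ab β : ℝ) (hp : 1 < p) (hQ : 1 < Q)
    (hab₁ : 1 ≤ ab) (hab₂ : Q = ab ^ p / (1 + p * (ab - 1)))
    (hab₃ : ∀ a : ℝ, 1 ≤ a → Q = a ^ p / (1 + p * (a - 1)) → a = ab)
    (hβ₁ : 1/p < β) (hβ₂ : β ≤ 1)
    (hβ₃ : Q ^ (1/(p-1)) = β ^ (p/(p-1)) / (1 + (p/(p-1)) * (β - 1))) :
    β / (p * β - 1) = ab / (p - 1) := by
  have hp0 : (0:ℝ) < p := by linarith
  have hp1 : (0:ℝ) < p - 1 := by linarith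
  have hpb : (0:ℝ) < p * β - 1 := by
    have := (div_lt_iff₀ hp0).mp hβ₁; linarith
  have hβ0 : (0:ℝ) < β := lt_trans (by positivity) hβ₁
  have hQ0 : (0:ℝ) < Q := by linarith
  set a := (p - 1) * β / (p * β - 1) with ha
  have ha0 : 0 < a := by positivity
  have ha1 : 1 ≤ a := by
    rw [ha, le_div_iff₀ hpb]; nlinarith
  have hr0 : (0:ℝ) < (p - 1) / (p * β - 1) := by positivity
  have hQ' : Q ^ (1/(p-1)) = β ^ (p/(p-1)) * ((p - 1) / (p * β - 1)) := by
    rw [hβ₃]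
    have hdenom : 1 + (p/(p-1)) * (β - 1) = (p * β - 1)/(p-1) := by
      field_simp; ring
    rw [hdenom, div_div_eq_mul_div, mul_div_assoc]
  have hQeq : Q = β ^ p * ((p - 1) / (p * β - 1)) ^ (p - 1) := by
    have h1 : (Q ^ (1/(p-1))) ^ (p-1) = Q := by
      rw [← Real.rpow_mul hQ0.le, one_div_mul_cancel hp1.ne', Real.rpow_one]
    rw [← h1, hQ', Real.mul_rpow (by positivity) hr0.le,
      ← Real.rpow_mul hβ0.le, div_mul_cancel₀ _ hp1.ne']
  -- show a solves the original equation
  have hmain : Q = a ^ p / (1 + p * (a - 1)) := by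
    have hden : 1 + p * (a - 1) = (p - 1) / (p * β - 1) := by
      rw [ha]; field_simp; ring
    have hap : a ^ p = β ^ p * ((p - 1) / (p * β - 1)) ^ p := by
      rw [ha, mul_comm (p-1) β, mul_div_assoc,
        Real.mul_rpow hβ0.le hr0.le]
    have hsplit : ((p - 1) / (p * β - 1)) ^ p
        = ((p - 1) / (p * β - 1)) ^ (p - 1) * ((p - 1) / (p * β - 1)) := by
      have h := Real.rpow_add hr0 (p - 1) 1
      rw [Real.rpow_one] at h
      rw [← h]; congr 1; ring
    rw [hap, hsplit, hden, hQeq]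
    field_simp
  have hab := hab₃ a ha1 hmain
  rw [ha] at hab
  field_simp at hab ⊢
  linarith [hab]
end

section
/- Let p > 1, Q > 1, p₁ = p₁(p/(p-1), Q^{1/p}), and let ᾱ ≥ 1 be the unique solution in [1,∞) of Q = ᾱ^p/(1+p(ᾱ-1)). Then p - p₁/(p₁ - 1) = (p-1)/ᾱ. -/
/-- Cross-multiplied strict monotonicity of `t ↦ t^p/(1+p(t-1))`, from Bernoulli. -/
lemma bern_cross {p a b : ℝ} (hp : 1 < p) (ha : 1 ≤ a) (hab : a < b) :
    a ^ p * (1 + p * (b - 1)) < b ^ p * (1 + p * (a - 1)) := by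
  have ha0 : (0:ℝ) < a := lt_of_lt_of_le one_pos ha
  have hs0 : 0 < (b - a) / a := div_pos (by linarith) ha0
  have hB : 1 + p * ((b - a) / a) < (1 + (b - a) / a) ^ p :=
    one_add_mul_self_lt_rpow_one_add (by linarith) (ne_of_gt hs0) hp
  have h1 : 1 + (b - a) / a = b / a := by field_simp; ring
  rw [h1, Real.div_rpow (by linarith : (0:ℝ) ≤ b) ha0.le] at hB
  have hap : (0:ℝ) < a ^ p := Real.rpow_pos_of_pos ha0 p
  have hB' : a ^ p * (1 + p * ((b - a) / a)) < b ^ p := by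
    rw [lt_div_iff₀ hap] at hB; linarith [hB]
  have hd : (0:ℝ) < 1 + p * (a - 1) := by nlinarith
  have hid : (1 + p * ((b - a) / a)) * (1 + p * (a - 1)) - (1 + p * (b - 1))
      = p * (b - a) * (p - 1) * (a - 1) / a := by
    field_simp
    ring
  have hnn : 0 ≤ p * (b - a) * (p - 1) * (a - 1) / a := by
    apply div_nonneg _ ha0.le
    have h2 : 0 ≤ (a - 1) := by linarith
    have h3 : 0 ≤ b - a := by linarith
    have h4 : 0 ≤ p - 1 := by linarith
    positivity
  have key : a ^ p * (1 + p * (b - 1)) ≤ a ^ p * (1 + p * ((b - a) / a)) * (1 + p * (a - 1)) := by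
    rw [mul_assoc]
    apply mul_le_mul_of_nonneg_left _ hap.le
    linarith [hid, hnn]
  calc a ^ p * (1 + p * (b - 1))
      ≤ a ^ p * (1 + p * ((b - a) / a)) * (1 + p * (a - 1)) := key
    _ < b ^ p * (1 + p * (a - 1)) := mul_lt_mul_of_pos_right hB' hd

set_option maxHeartbeats 1000000 in
/-- With p₁ = p₁(p/(p-1), Q^{1/p}) and ᾱ ≥ 1 the unique solution of
Q = ᾱ^p/(1+p(ᾱ-1)), one has p - p₁/(p₁-1) = (p-1)/ᾱ. -/
theorem delta_identity (p Q p₁ ab : ℝ) (hp : 1 < p) (hQ : 1 < Q)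
    (hp₁ : p/(p-1) < p₁)
    (hp₁eq : (Q ^ (1/p)) ^ (p/(p-1)) * ((p₁ - p/(p-1)) / p₁) *
      (p₁ / (p₁ - 1)) ^ (p/(p-1)) = 1)
    (hab₁ : 1 ≤ ab) (hab₂ : Q = ab ^ p / (1 + p * (ab - 1))) :
    p - p₁ / (p₁ - 1) = (p - 1) / ab := by
  have hp0 : (0:ℝ) < p := by linarith
  have hp1 : (0:ℝ) < p - 1 := by linarith
  have hQ0 : (0:ℝ) < Q := by linarith
  set x := p₁ with hxdef
  have hs1 : (1:ℝ) < p / (p - 1) := by rw [lt_div_iff₀ hp1]; linarith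
  have hx1 : (1:ℝ) < x := lt_trans hs1 hp₁
  have hx0 : (0:ℝ) < x := by linarith
  have hxm1 : (0:ℝ) < x - 1 := by linarith
  have hD : (0:ℝ) < (p - 1) * x - p := by
    have h := (div_lt_iff₀ hp1).mp hp₁
    nlinarith
  set D := (p - 1) * x - p with hDdef
  have hxs : (0:ℝ) < x - p / (p - 1) := by linarith [hp₁]
  -- Step 1a: simplify the nested rpow on Q
  have e1 : (Q ^ (1/p)) ^ (p/(p-1)) = Q ^ (1/(p-1)) := by
    rw [← Real.rpow_mul hQ0.le]
    congr 1
    field_simp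
  rw [e1] at hp₁eq
  -- Step 1b: raise hp₁eq to the power (p-1)
  have hE : Q * ((x - p/(p-1))/x) ^ (p-1) * (x/(x-1)) ^ p = 1 := by
    have h := congrArg (fun y : ℝ => y ^ (p-1)) hp₁eq
    simp only [Real.one_rpow] at h
    rw [Real.mul_rpow (by positivity) (by positivity),
        Real.mul_rpow (by positivity) (by positivity),
        ← Real.rpow_mul hQ0.le,
        ← Real.rpow_mul (by positivity : (0:ℝ) ≤ x/(x-1))] at h
    have h2 : 1/(p-1) * (p-1) = 1 := by field_simp
    have h3 : p/(p-1) * (p-1) = p := by field_simp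
    rw [h2, h3, Real.rpow_one] at h
    exact h
  -- Step 1c: invert the factors multiplicatively
  have P1 : ((x - p/(p-1))/x) ^ (p-1) * ((p-1)*x/D) ^ (p-1) = 1 := by
    rw [← Real.mul_rpow (by positivity) (by positivity)]
    have : (x - p/(p-1))/x * ((p-1)*x/D) = 1 := by
      have hDne : D ≠ 0 := ne_of_gt hD
      field_simp; rw [hDdef]; ring
    rw [this, Real.one_rpow]
  have P2 : (x/(x-1)) ^ p * ((x-1)/x) ^ p = 1 := by
    rw [← Real.mul_rpow (by positivity) (by positivity)]
    have : x/(x-1) * ((x-1)/x) = 1 := by field_simp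
    rw [this, Real.one_rpow]
  have hQx : Q = ((p-1)*x/D) ^ (p-1) * ((x-1)/x) ^ p := by
    calc Q = Q * (((x - p/(p-1))/x) ^ (p-1) * ((p-1)*x/D) ^ (p-1))
              * ((x/(x-1)) ^ p * ((x-1)/x) ^ p) := by rw [P1, P2]; ring
      _ = (Q * ((x - p/(p-1))/x) ^ (p-1) * (x/(x-1)) ^ p)
              * (((p-1)*x/D) ^ (p-1) * ((x-1)/x) ^ p) := by ring
      _ = ((p-1)*x/D) ^ (p-1) * ((x-1)/x) ^ p := by rw [hE]; ring
  -- Step 2: set a := (p-1)(x-1)/D and show Q*(1+p(a-1)) = a^p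
  set a := (p - 1) * (x - 1) / D with hadef
  have ha1 : 1 < a := by
    rw [hadef, lt_div_iff₀ hD]
    nlinarith
  have hden : 1 + p * (a - 1) = (p - 1) * x / D := by
    rw [hadef]
    field_simp
    ring
  have hsplit1 : ((p-1)*x/D) ^ (p-1) = (p-1) ^ (p-1) * x ^ (p-1) / D ^ (p-1) := by
    rw [Real.div_rpow (by positivity) hD.le, Real.mul_rpow hp1.le hx0.le]
  have hsplit2 : ((x-1)/x) ^ p = (x-1) ^ p / x ^ p := Real.div_rpow hxm1.le hx0.le p
  have hsplit3 : ((p-1)*(x-1)/D) ^ p = (p-1) ^ p * (x-1) ^ p / D ^ p := by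
    rw [Real.div_rpow (by positivity) hD.le, Real.mul_rpow hp1.le hxm1.le]
  have hxq : x ^ (p-1) = x ^ p / x := by
    rw [Real.rpow_sub hx0, Real.rpow_one]
  have hDq : D ^ (p-1) = D ^ p / D := by
    rw [Real.rpow_sub hD, Real.rpow_one]
  have hPq : (p-1) ^ (p-1) = (p-1) ^ p / (p-1) := by
    rw [Real.rpow_sub hp1, Real.rpow_one]
  have hXp : (0:ℝ) < x ^ p := Real.rpow_pos_of_pos hx0 _
  have hDp : (0:ℝ) < D ^ p := Real.rpow_pos_of_pos hD _
  have hPp : (0:ℝ) < (p-1) ^ p := Real.rpow_pos_of_pos hp1 _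
  have hXm1p : (0:ℝ) < (x-1) ^ p := Real.rpow_pos_of_pos hxm1 _
  have hda : (0:ℝ) < 1 + p * (a - 1) := by nlinarith
  have hQa : Q * (1 + p * (a - 1)) = a ^ p := by
    rw [hQx, hden, hadef, hsplit1, hsplit2, hsplit3, hxq, hDq, hPq]
    set A := (p-1) ^ p with hA
    set B := x ^ p with hB
    set C := D ^ p with hC
    set E := (x-1) ^ p with hEE
    have hne1 : D ≠ 0 := ne_of_gt hD
    have hne2 : C ≠ 0 := ne_of_gt hDp
    have hne3 : B ≠ 0 := ne_of_gt hXp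
    field_simp
  -- Step 3: uniqueness on [1,∞): a = ab
  have hdab : (0:ℝ) < 1 + p * (ab - 1) := by nlinarith
  have hQab : Q * (1 + p * (ab - 1)) = ab ^ p := by
    rw [hab₂]; field_simp
  have hcross : ab ^ p * (1 + p * (a - 1)) = a ^ p * (1 + p * (ab - 1)) := by
    rw [← hQab, ← hQa]; ring
  have hab_eq : a = ab := by
    rcases lt_trichotomy a ab with h | h | h
    · exact absurd hcross.symm (ne_of_lt (bern_cross hp ha1.le h))
    · exact h
    · exact absurd hcross (ne_of_lt (bern_cross hp hab₁ h))
  -- Step 4: conclude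
  rw [← hab_eq, hadef, hDdef]
  have h1 : x - 1 ≠ 0 := ne_of_gt hxm1
  have h2 : p - 1 ≠ 0 := ne_of_gt hp1
  have h3 : (p-1)*x - p ≠ 0 := ne_of_gt hD
  field_simp
  ring
end

section
/- Let p > 1, t > 1, and let p₁(p,t) be the unique solution in (p,∞) of t^p·((x-p)/x)·(x/(x-1))^p = 1. Then p₁(p,t) is strictly decreasing in t: if 1 < t₁ < t₂ then p₁(p, t₂) < p₁(p, t₁), and p₁(p,t) → ∞ as t → 1⁺. -/
open Filter Real

section Aux

variable (p : ℝ)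

/-- log of the x-dependent part. -/
noncomputable def hAux (x : ℝ) : ℝ :=
  Real.log (x - p) + (p - 1) * Real.log x - p * Real.log (x - 1)

lemma hAux_hasDerivAt (hp : 1 < p) {x : ℝ} (hx : p < x) :
    HasDerivAt (hAux p) (1 / (x - p) + (p - 1) * (1 / x) - p * (1 / (x - 1))) x := by
  have hx0 : (0:ℝ) < x := lt_trans (lt_trans zero_lt_one hp) hx
  have hx1 : (1:ℝ) < x := lt_trans hp hx
  have h1 : HasDerivAt (fun y : ℝ => Real.log (y - p)) (1 / (x - p)) x := by
    have := ((hasDerivAt_id x).sub_const p).log (by linarith : x - p ≠ 0)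
    simpa using this
  have h2 : HasDerivAt (fun y : ℝ => (p - 1) * Real.log y) ((p - 1) * (1 / x)) x := by
    have := (Real.hasDerivAt_log hx0.ne').const_mul (p - 1)
    simpa [one_div] using this
  have h3 : HasDerivAt (fun y : ℝ => p * Real.log (y - 1)) (p * (1 / (x - 1))) x := by
    have := (((hasDerivAt_id x).sub_const 1).log (by linarith : x - 1 ≠ 0)).const_mul p
    simpa using this
  exact (h1.add h2).sub h3

lemma hAux_strictMono (hp : 1 < p) : StrictMonoOn (hAux p) (Set.Ioi p) := by
  apply strictMonoOn_of_deriv_pos (convex_Ioi p)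
  · intro x hx
    exact (hAux_hasDerivAt p hp hx).continuousAt.continuousWithinAt
  · intro x hx
    rw [interior_Ioi] at hx
    have hx' : p < x := hx
    have hx1 : (1:ℝ) < x := lt_trans hp hx'
    have hx0 : (0:ℝ) < x := lt_trans zero_lt_one hx1
    rw [(hAux_hasDerivAt p hp hx').deriv]
    have n1 : x - p ≠ 0 := by linarith
    have n2 : x ≠ 0 := hx0.ne'
    have n3 : x - 1 ≠ 0 := by linarith
    have hkey : 1 / (x - p) + (p - 1) * (1 / x) - p * (1 / (x - 1))
        = p * (p - 1) / ((x - p) * x * (x - 1)) := by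
      field_simp
      ring
    rw [hkey]
    exact div_pos (mul_pos (by linarith) (by linarith))
      (mul_pos (mul_pos (by linarith) hx0) (by linarith))

/-- The x-dependent factor equals `exp (hAux p x)`. -/
lemma g_eq_exp (hp : 1 < p) {x : ℝ} (hx : p < x) :
    ((x - p) / x) * (x / (x - 1)) ^ p = Real.exp (hAux p x) := by
  have hx1 : (1:ℝ) < x := lt_trans hp hx
  have hx0 : (0:ℝ) < x := lt_trans zero_lt_one hx1
  have hxp : (0:ℝ) < x - p := by linarith
  have hx1' : (0:ℝ) < x - 1 := by linarith
  rw [hAux, Real.exp_sub, Real.exp_add, Real.exp_log hxp]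
  rw [mul_comm (p - 1) (Real.log x), mul_comm p (Real.log (x - 1)),
    ← Real.rpow_def_of_pos hx0, ← Real.rpow_def_of_pos hx1']
  rw [Real.div_rpow hx0.le hx1'.le]
  rw [show p - 1 = p + (-1) by ring, Real.rpow_add hx0, Real.rpow_neg_one]
  field_simp

end Aux

/-- p₁(p,t) is strictly decreasing in t and p₁(p,t) → ∞ as t → 1⁺. -/
theorem p1_decreasing_in_t (p : ℝ) (hp : 1 < p) :
    (∀ t₁ t₂ x₁ x₂ : ℝ, 1 < t₁ → t₁ < t₂ →
      p < x₁ → t₁ ^ p * ((x₁ - p)/x₁) * (x₁/(x₁ - 1)) ^ p = 1 →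
      p < x₂ → t₂ ^ p * ((x₂ - p)/x₂) * (x₂/(x₂ - 1)) ^ p = 1 → x₂ < x₁) ∧
    (∀ P : ℝ → ℝ,
      (∀ t : ℝ, 1 < t → p < P t ∧
        t ^ p * ((P t - p)/(P t)) * (P t/(P t - 1)) ^ p = 1) →
      Tendsto P (nhdsWithin 1 (Set.Ioi 1)) atTop) := by
  have hp0 : (0:ℝ) < p := lt_trans zero_lt_one hp
  -- abbreviation for the x-dependent factor
  set g : ℝ → ℝ := fun x => ((x - p) / x) * (x / (x - 1)) ^ p with hg
  have hgexp : ∀ x : ℝ, p < x → g x = Real.exp (hAux p x) := fun x hx => g_eq_exp p hp hx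
  have hgmono : StrictMonoOn g (Set.Ioi p) := by
    intro a ha b hb hab
    rw [hgexp a ha, hgexp b hb]
    exact Real.exp_lt_exp.2 (hAux_strictMono p hp ha hb hab)
  have hgpos : ∀ x : ℝ, p < x → 0 < g x := by
    intro x hx
    rw [hgexp x hx]; exact Real.exp_pos _
  -- g < 1 on (p, ∞) via Bernoulli
  have hglt1 : ∀ x : ℝ, p < x → g x < 1 := by
    intro x hx
    have hx1 : (1:ℝ) < x := lt_trans hp hx
    have hx0 : (0:ℝ) < x := lt_trans zero_lt_one hx1
    have hx1' : (0:ℝ) < x - 1 := by linarith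
    have hbern : 1 + p * (-(1/x)) < (1 + (-(1/x))) ^ p := by
      apply one_add_mul_self_lt_rpow_one_add _ _ hp
      · rw [neg_le, neg_neg]
        rw [div_le_one hx0]; linarith
      · simp [hx0.ne']
    have e1 : 1 + p * (-(1/x)) = (x - p) / x := by field_simp; ring
    have e2 : 1 + (-(1/x)) = (x - 1) / x := by field_simp; ring
    rw [e1, e2] at hbern
    have h2 : g x < ((x - 1)/x) ^ p * (x/(x-1)) ^ p := by
      apply mul_lt_mul_of_pos_right hbern
      exact Real.rpow_pos_of_pos (div_pos hx0 hx1') p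
    have h3 : ((x - 1)/x) ^ p * (x/(x-1)) ^ p = 1 := by
      rw [← Real.mul_rpow (by positivity) (by positivity)]
      rw [div_mul_div_comm]
      rw [show (x-1) * x / (x * (x-1)) = 1 by field_simp]
      exact Real.one_rpow p
    rwa [h3] at h2
  constructor
  · intro t₁ t₂ x₁ x₂ ht₁ ht₁₂ hx₁ heq₁ hx₂ heq₂
    have ht₁0 : (0:ℝ) < t₁ := lt_trans zero_lt_one ht₁
    have ht₂0 : (0:ℝ) < t₂ := lt_trans ht₁0 ht₁₂
    have htp : t₁ ^ p < t₂ ^ p := Real.rpow_lt_rpow ht₁0.le ht₁₂ hp0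
    have htp1 : (0:ℝ) < t₁ ^ p := Real.rpow_pos_of_pos ht₁0 p
    have htp2 : (0:ℝ) < t₂ ^ p := Real.rpow_pos_of_pos ht₂0 p
    -- rewrite the equations as t^p * g x = 1
    have heq₁' : t₁ ^ p * g x₁ = 1 := by rw [hg]; dsimp only; rw [← mul_assoc]; exact heq₁
    have heq₂' : t₂ ^ p * g x₂ = 1 := by rw [hg]; dsimp only; rw [← mul_assoc]; exact heq₂
    have hgx₁ : g x₁ = 1 / t₁ ^ p := by field_simp at heq₁' ⊢; linarith
    have hgx₂ : g x₂ = 1 / t₂ ^ p := by field_simp at heq₂' ⊢; linarith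
    have hglt : g x₂ < g x₁ := by
      rw [hgx₁, hgx₂]
      exact one_div_lt_one_div_of_lt htp1 htp
    by_contra hle
    push_neg at hle
    rcases eq_or_lt_of_le hle with rfl | hlt
    · exact lt_irrefl _ hglt
    · exact absurd (hgmono hx₁ hx₂ hlt) (not_lt.2 hglt.le)
  · intro P hP
    rw [tendsto_atTop]
    intro b
    set M : ℝ := max b (p + 1) with hM
    have hMp : p < M := lt_of_lt_of_le (by linarith) (le_max_right _ _)
    have hgM : g M < 1 := hglt1 M hMp
    have hgMpos : 0 < g M := hgpos M hMp
    -- t^p → 1 as t → 1, so eventually t^p < 1 / g M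
    have hcont : Tendsto (fun t : ℝ => t ^ p) (nhdsWithin 1 (Set.Ioi 1)) (nhds 1) := by
      have : Tendsto (fun t : ℝ => t ^ p) (nhds 1) (nhds ((1:ℝ) ^ p)) := by
        apply Real.continuousAt_rpow_const _ _ (Or.inl one_ne_zero) |>.tendsto
      rw [Real.one_rpow] at this
      exact this.mono_left nhdsWithin_le_nhds
    have hev : ∀ᶠ t in nhdsWithin (1:ℝ) (Set.Ioi 1), (fun t : ℝ => t ^ p) t < 1 / g M := by
      apply hcont.eventually_lt_const
      rw [lt_div_iff₀ hgMpos, one_mul]; exact hgM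
    filter_upwards [hev, self_mem_nhdsWithin] with t htlt htmem
    have ht1 : (1:ℝ) < t := htmem
    have ht0 : (0:ℝ) < t := lt_trans zero_lt_one ht1
    have htp0 : (0:ℝ) < t ^ p := Real.rpow_pos_of_pos ht0 p
    obtain ⟨hPt, heq⟩ := hP t ht1
    have heq' : t ^ p * g (P t) = 1 := by rw [hg]; dsimp only; rw [← mul_assoc]; exact heq
    -- t^p * g M < 1 = t^p * g (P t), so g M < g (P t), so M < P t
    have h1 : t ^ p * g M < t ^ p * g (P t) := by
      rw [heq']
      calc t ^ p * g M < (1 / g M) * g M := by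
            apply mul_lt_mul_of_pos_right htlt hgMpos
        _ = 1 := by field_simp
    have h2 : g M < g (P t) := lt_of_mul_lt_mul_left h1 htp0.le
    have h3 : M < P t := by
      by_contra hle
      push_neg at hle
      rcases eq_or_lt_of_le hle with heq2 | hlt
      · rw [heq2] at h2; exact lt_irrefl _ h2
      · exact absurd (hgmono hPt hMp hlt) (not_lt.2 h2.le)
    exact le_of_lt (lt_of_le_of_lt (le_max_left _ _) h3)
end
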